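/- Suppose f : (−R,R) → ℝ is twice differentiable and Loewner convex on the set of n×n positive semidefinite matrices of rank at most k (2 ≤ k ≤ n) with entries in (−R,R). If A in this set is irreducible, then f''[A] is positive semidefinite. -/

import Mathlib

open scoped ENNReal NNReal
open Matrix Finset

section Aux

open Finset Matrix in
/-- Finitely many nonzero vectors admit a common non-orthogonal vector. -/
lemma aux_exists_dot_ne {n : ℕ} (v : Fin n → (Fin n → ℝ)) (hv : ∀ i, v i ≠ 0) :
    ∃ c : Fin n → ℝ, ∀ i, dotProduct (v i) c ≠ 0 := by
  suffices h : ∀ s : Finset (Fin n), ∃ c : Fin n → ℝ, ∀ i ∈ s, dotProduct (v i) c ≠ 0 by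
    obtain ⟨c, hc⟩ := h Finset.univ
    exact ⟨c, fun i => hc i (mem_univ i)⟩
  intro s
  induction s using Finset.induction_on with
  | empty => exact ⟨0, by simp⟩
  | @insert a s ha ih =>
    obtain ⟨c, hc⟩ := ih
    set d := v a with hd
    have hda : dotProduct (v a) d ≠ 0 := by
      rw [hd]
      intro h
      apply hv a
      funext j
      simp only [Pi.zero_apply]
      have := (Finset.sum_eq_zero_iff_of_nonneg (fun i _ => mul_self_nonneg (v a i))).mp h j (mem_univ j)
      nlinarith [this]
    -- bad set of t's
    have hfin : (⋃ i ∈ (insert a s : Finset (Fin n)),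
        {t : ℝ | dotProduct (v i) c + t * dotProduct (v i) d = 0}).Finite := by
      refine Set.Finite.biUnion (Finset.finite_toSet _) (fun i hi => ?_)
      have hi' : dotProduct (v i) c ≠ 0 ∨ dotProduct (v i) d ≠ 0 := by
        rcases Finset.mem_insert.mp hi with rfl | hi2
        · exact Or.inr hda
        · exact Or.inl (hc i hi2)
      apply Set.Subsingleton.finite
      intro t1 h1 t2 h2
      simp only [Set.mem_setOf_eq] at h1 h2
      rcases hi' with h | h
      · have hdne : dotProduct (v i) d ≠ 0 := by
          intro hz; rw [hz] at h1; simpa [h] using h1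
        have : (t1 - t2) * dotProduct (v i) d = 0 := by ring_nf; nlinarith [h1, h2]
        rcases mul_eq_zero.mp this with h' | h'
        · linarith [sub_eq_zero.mp h']
        · exact absurd h' hdne
      · have : (t1 - t2) * dotProduct (v i) d = 0 := by ring_nf; nlinarith [h1, h2]
        rcases mul_eq_zero.mp this with h' | h'
        · linarith [sub_eq_zero.mp h']
        · exact absurd h' h
    obtain ⟨t, ht⟩ := (Set.Finite.infinite_compl hfin).nonempty
    refine ⟨c + t • d, fun i hi => ?_⟩
    have : dotProduct (v i) (c + t • d) = dotProduct (v i) c + t * dotProduct (v i) d := by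
      rw [dotProduct_add, dotProduct_smul, smul_eq_mul]
    rw [this]
    intro h
    exact ht (Set.mem_biUnion hi h)

lemma aux_cs {n : ℕ} {A : Matrix (Fin n) (Fin n) ℝ} (hA : A.PosSemidef) (x y : Fin n → ℝ) :
    (x ⬝ᵥ A *ᵥ y)^2 ≤ (x ⬝ᵥ A *ᵥ x) * (y ⬝ᵥ A *ᵥ y) := by
  have hq : ∀ z : Fin n → ℝ, 0 ≤ z ⬝ᵥ A *ᵥ z := fun z => by simpa using hA.dotProduct_mulVec_nonneg z
  have hsym : ∀ z w : Fin n → ℝ, z ⬝ᵥ A *ᵥ w = w ⬝ᵥ A *ᵥ z := by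
    intro z w
    rw [dotProduct_mulVec, ← Matrix.mulVec_transpose]
    rw [show Aᵀ = A from by simpa [Matrix.IsHermitian] using hA.1]
    exact dotProduct_comm _ _
  have key : ∀ t : ℝ, 0 ≤ (y ⬝ᵥ A *ᵥ y) * (t * t) + (2 * (x ⬝ᵥ A *ᵥ y)) * t + (x ⬝ᵥ A *ᵥ x) := by
    intro t
    have h := hq (x + t • y)
    have hexp : (x + t • y) ⬝ᵥ A *ᵥ (x + t • y)
        = (y ⬝ᵥ A *ᵥ y) * (t * t) + (2 * (x ⬝ᵥ A *ᵥ y)) * t + (x ⬝ᵥ A *ᵥ x) := by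
      simp only [Matrix.mulVec_add, Matrix.mulVec_smul, dotProduct_add, add_dotProduct,
        dotProduct_smul, smul_dotProduct, smul_eq_mul]
      rw [hsym y x]
      ring
    linarith [hexp ▸ h]
  have hd := discrim_le_zero key
  rw [discrim] at hd
  nlinarith [hd]

lemma aux_nnabs_lt {x : ℝ} {r : ℝ≥0} (h : |x| < (r : ℝ)) : (Real.nnabs x : ℝ≥0∞) < (r : ℝ≥0∞) := by
  rw [ENNReal.coe_lt_coe, ← NNReal.coe_lt_coe, Real.coe_nnabs]
  exact h

lemma aux_lt_nnabs {x : ℝ} {r : ℝ≥0} (h : (Real.nnabs x : ℝ≥0∞) < (r : ℝ≥0∞)) : |x| < (r : ℝ) := by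
  rw [ENNReal.coe_lt_coe, ← NNReal.coe_lt_coe, Real.coe_nnabs] at h
  exact h

lemma aux_delta {R : ℝ≥0∞} {n : ℕ} (hn : 0 < n) (A : Matrix (Fin n) (Fin n) ℝ)
    (hent : ∀ i j, (Real.nnabs (A i j) : ℝ≥0∞) < R) :
    ∃ δ : ℝ, 0 < δ ∧ ∀ (i j : Fin n) (x : ℝ), |x - A i j| ≤ δ → (Real.nnabs x : ℝ≥0∞) < R := by
  cases R with
  | top => exact ⟨1, one_pos, fun i j x _ => ENNReal.coe_lt_top⟩
  | coe r =>
    have habs : ∀ i j, |A i j| < (r : ℝ) := fun i j => aux_lt_nnabs (hent i j)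
    have hne : (Finset.univ : Finset (Fin n × Fin n)).Nonempty := by
      haveI : NeZero n := ⟨hn.ne'⟩
      exact Finset.univ_nonempty
    set m := Finset.univ.inf' hne (fun p : Fin n × Fin n => (r : ℝ) - |A p.1 p.2|) with hm
    have hmpos : 0 < m := by
      rw [hm, Finset.lt_inf'_iff]
      exact fun p _ => sub_pos.mpr (habs p.1 p.2)
    refine ⟨m / 2, by positivity, fun i j x hx => ?_⟩
    have hle : m ≤ (r : ℝ) - |A i j| := Finset.inf'_le _ (Finset.mem_univ (i, j))
    apply aux_nnabs_lt
    have : |x| ≤ |x - A i j| + |A i j| := by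
      calc |x| = |(x - A i j) + A i j| := by ring_nf
        _ ≤ |x - A i j| + |A i j| := abs_add_le _ _
    linarith


end Aux

/-- If `f : (-R,R) → ℝ` is twice differentiable and Loewner convex on `n×n` PSD matrices
of rank at most `k` (`2 ≤ k ≤ n`) with entries in `(-R,R)`, and `A` in this set is
irreducible, then `f''[A]` is positive semidefinite. -/
theorem stmt10 (R : ℝ≥0∞) (hR : 0 < R) (n k : ℕ) (hk : 2 ≤ k) (hkn : k ≤ n)
    (f f' f'' : ℝ → ℝ)
    (hderiv1 : ∀ x : ℝ, (Real.nnabs x : ℝ≥0∞) < R → HasDerivAt f (f' x) x)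
    (hderiv2 : ∀ x : ℝ, (Real.nnabs x : ℝ≥0∞) < R → HasDerivAt f' (f'' x) x)
    (hconv : ∀ A B : Matrix (Fin n) (Fin n) ℝ,
      (∀ i j, (Real.nnabs (A i j) : ℝ≥0∞) < R) →
      (∀ i j, (Real.nnabs (B i j) : ℝ≥0∞) < R) →
      A.rank ≤ k → B.rank ≤ k →
      B.PosSemidef → (A - B).PosSemidef →
      ∀ l : ℝ, 0 ≤ l → l ≤ 1 →
        (l • A.map f + (1 - l) • B.map f - (l • A + (1 - l) • B).map f).PosSemidef)
    (A : Matrix (Fin n) (Fin n) ℝ) (hA : A.PosSemidef) (hrk : A.rank ≤ k)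
    (hent : ∀ i j, (Real.nnabs (A i j) : ℝ≥0∞) < R)
    (hirr : ∀ S : Set (Fin n), S.Nonempty → S ≠ Set.univ →
      ∃ i ∈ S, ∃ j ∈ Sᶜ, A i j ≠ 0) :
    (A.map f'').PosSemidef := by
  have hn2 : 2 ≤ n := hk.trans hkn
  have hn : 0 < n := by omega
  haveI : NeZero n := ⟨hn.ne'⟩
  obtain ⟨δ, hδpos, hδ⟩ := aux_delta hn A hent
  have hAsym : ∀ i j, A j i = A i j := by
    intro i j
    have := congrFun (congrFun hA.1 i) j
    simpa [Matrix.conjTranspose_apply] using this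
  -- rows are nonzero
  have hrow : ∀ i : Fin n, A i ≠ 0 := by
    intro i h0
    haveI : Nontrivial (Fin n) := Fin.nontrivial_iff_two_le.mpr hn2
    obtain ⟨j0, hj0⟩ := exists_ne i
    have hne : ({i} : Set (Fin n)) ≠ Set.univ := by
      intro h
      have : j0 ∈ ({i} : Set (Fin n)) := h ▸ Set.mem_univ j0
      exact hj0 this
    obtain ⟨i', hi', j, hj, hij⟩ := hirr {i} ⟨i, rfl⟩ hne
    rcases hi' with rfl
    exact hij (by rw [h0]; rfl)
  obtain ⟨c, hc⟩ := aux_exists_dot_ne (fun i => A i) hrow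
  set u : Fin n → ℝ := A *ᵥ c with hu_def
  have hu : ∀ i, u i ≠ 0 := hc
  -- constants
  have hq0 : 0 ≤ c ⬝ᵥ A *ᵥ c := by simpa using hA.dotProduct_mulVec_nonneg c
  set q : ℝ := c ⬝ᵥ A *ᵥ c with hq_def
  have hneP : (Finset.univ : Finset (Fin n × Fin n)).Nonempty := Finset.univ_nonempty
  set W : ℝ := 1 + Finset.univ.sup' hneP (fun p : Fin n × Fin n => |u p.1 * u p.2|) with hW_def
  have hWb : ∀ i j, |u i * u j| ≤ W := by
    intro i j
    have h1 : |u i * u j| ≤ Finset.univ.sup' hneP (fun p : Fin n × Fin n => |u p.1 * u p.2|) :=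
      Finset.le_sup' (fun p : Fin n × Fin n => |u p.1 * u p.2|) (Finset.mem_univ (i, j))
    rw [hW_def]; linarith
  have hWpos : 0 < W := lt_of_lt_of_le (abs_pos.mpr (mul_ne_zero (hu 0) (hu 0))) (hWb 0 0)
  set T : ℝ := min (δ / W) (1 / (q + 1)) with hT_def
  have hT : 0 < T := lt_min (div_pos hδpos hWpos) (div_pos one_pos (by linarith))
  have hTq : T * q ≤ 1 := by
    have h1 : T ≤ 1 / (q + 1) := min_le_right _ _
    have h2 : T * (q + 1) ≤ 1 := by
      rw [← le_div_iff₀ (by linarith : (0:ℝ) < q + 1)]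
      exact h1
    nlinarith [hT]
  have hTW : ∀ (t : ℝ), |t| ≤ T → ∀ i j, |t * (u i * u j)| ≤ δ := by
    intro t ht i j
    have h1 : T ≤ δ / W := min_le_left _ _
    calc |t * (u i * u j)| = |t| * |u i * u j| := abs_mul _ _
      _ ≤ T * W := by
          apply mul_le_mul ht (hWb i j) (abs_nonneg _) (le_of_lt hT)
      _ ≤ (δ / W) * W := by nlinarith
      _ = δ := div_mul_cancel₀ _ (ne_of_gt hWpos)
  -- the perturbation matrix
  set V : Matrix (Fin n) (Fin n) ℝ := Matrix.of (fun i j => u i * u j) with hV_def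
  set M : ℝ → Matrix (Fin n) (Fin n) ℝ := fun t => A + t • V with hM_def
  have hMentry : ∀ t i j, M t i j = A i j + t * (u i * u j) := by
    intro t i j
    simp [hM_def, hV_def, Matrix.add_apply, Matrix.smul_apply, smul_eq_mul]
  have hMent : ∀ (t : ℝ), |t| ≤ T → ∀ i j, (Real.nnabs (M t i j) : ℝ≥0∞) < R := by
    intro t ht i j
    apply hδ i j
    rw [hMentry]
    simpa using hTW t ht i j
  have hVmul : ∀ x : Fin n → ℝ, V *ᵥ x = (u ⬝ᵥ x) • u := by
    intro x
    funext i
    show ∑ j, (u i * u j) * x j = (∑ j, u j * x j) * u i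
    rw [Finset.sum_mul]
    exact Finset.sum_congr rfl fun j _ => by ring
  have hVform : ∀ x : Fin n → ℝ, x ⬝ᵥ V *ᵥ x = (u ⬝ᵥ x) * (u ⬝ᵥ x) := by
    intro x
    rw [hVmul, dotProduct_smul, smul_eq_mul, dotProduct_comm]
  have hherm : ∀ t, (M t).IsHermitian := by
    intro t
    show (M t)ᴴ = M t
    ext i j
    simp only [Matrix.conjTranspose_apply, star_trivial, hMentry]
    rw [hAsym j i]
    ring
  have hVpsd : ∀ r : ℝ, 0 ≤ r → (r • V).PosSemidef := by
    intro r hr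
    apply Matrix.PosSemidef.of_dotProduct_mulVec_nonneg
    · show (r • V)ᴴ = r • V
      ext i j
      simp only [Matrix.conjTranspose_apply, star_trivial, Matrix.smul_apply, hV_def,
        Matrix.of_apply, smul_eq_mul]
      ring
    · intro x
      have : star x = x := star_trivial x
      rw [this, Matrix.smul_mulVec, dotProduct_smul, smul_eq_mul, hVform]
      nlinarith [mul_self_nonneg (u ⬝ᵥ x)]
  have hucs : ∀ x : Fin n → ℝ, (u ⬝ᵥ x) * (u ⬝ᵥ x) ≤ (x ⬝ᵥ A *ᵥ x) * q := by
    intro x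
    have h1 : u ⬝ᵥ x = x ⬝ᵥ A *ᵥ c := by
      rw [hu_def, dotProduct_comm]
    have := aux_cs hA x c
    rw [h1]
    nlinarith [this]
  have hpsd : ∀ (t : ℝ), |t| ≤ T → (M t).PosSemidef := by
    intro t ht
    refine Matrix.PosSemidef.of_dotProduct_mulVec_nonneg (hherm t) (fun x => ?_)
    rw [star_trivial]
    have hform : x ⬝ᵥ (M t *ᵥ x) = x ⬝ᵥ A *ᵥ x + t * ((u ⬝ᵥ x) * (u ⬝ᵥ x)) := by
      rw [hM_def]
      simp only [Matrix.add_mulVec, Matrix.smul_mulVec, dotProduct_add, dotProduct_smul,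
        smul_eq_mul]
      rw [hVform]
    rw [hform]
    have hxx : 0 ≤ x ⬝ᵥ A *ᵥ x := by simpa using hA.dotProduct_mulVec_nonneg x
    rcases le_or_gt 0 t with htpos | htneg
    · nlinarith [mul_self_nonneg (u ⬝ᵥ x)]
    · have h2 := hucs x
      have h3 : |t| = -t := abs_of_neg htneg
      rw [h3] at ht
      nlinarith [mul_self_nonneg (u ⬝ᵥ x)]
  have hrank : ∀ t : ℝ, (M t).rank ≤ k := by
    intro t
    have hle : LinearMap.range (M t).mulVecLin ≤ LinearMap.range A.mulVecLin := by
      rintro _ ⟨x, rfl⟩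
      refine ⟨x + (t * (u ⬝ᵥ x)) • c, ?_⟩
      show A *ᵥ (x + (t * (u ⬝ᵥ x)) • c) = (M t) *ᵥ x
      rw [Matrix.mulVec_add, Matrix.mulVec_smul, hM_def]
      rw [Matrix.add_mulVec, Matrix.smul_mulVec, hVmul]
      rw [← hu_def, smul_smul, mul_comm t (u ⬝ᵥ x)]
    exact le_trans (Submodule.finrank_mono hle) hrk
  -- the key quadratic-form inequality
  have key : ∀ x : Fin n → ℝ,
      0 ≤ ∑ i, ∑ j, x i * x j * (f'' (A i j) * ((u i * u j) * (u i * u j))) := by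
    intro x
    set C : ℝ := ∑ i, ∑ j, x i * x j * (f'' (A i j) * ((u i * u j) * (u i * u j))) with hC_def
    set φ : ℝ → ℝ := fun t => ∑ i, ∑ j, x i * x j * f (A i j + t * (u i * u j)) with hφ_def
    set ψ : ℝ → ℝ := fun t => ∑ i, ∑ j, x i * x j * (f' (A i j + t * (u i * u j)) * (u i * u j))
      with hψ_def
    have hentT : ∀ (t : ℝ), |t| ≤ T → ∀ i j,
        (Real.nnabs (A i j + t * (u i * u j)) : ℝ≥0∞) < R := by
      intro t ht i j
      apply hδ i j
      simpa using hTW t ht i j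
    have hlin : ∀ (t : ℝ) (i j : Fin n),
        HasDerivAt (fun s : ℝ => A i j + s * (u i * u j)) (u i * u j) t := by
      intro t i j
      simpa using ((hasDerivAt_id t).mul_const (u i * u j)).const_add (A i j)
    have hφd : ∀ (t : ℝ), |t| ≤ T → HasDerivAt φ (ψ t) t := by
      intro t ht
      rw [hφ_def, hψ_def]
      apply HasDerivAt.fun_sum
      intro i _
      apply HasDerivAt.fun_sum
      intro j _
      exact (((hderiv1 _ (hentT t ht i j)).comp t (hlin t i j)).const_mul (x i * x j))
    have hψd : HasDerivAt ψ C 0 := by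
      have H : HasDerivAt ψ
          (∑ i, ∑ j, x i * x j * (f'' (A i j + 0 * (u i * u j)) * (u i * u j) * (u i * u j))) 0 := by
        rw [hψ_def]
        apply HasDerivAt.fun_sum
        intro i _
        apply HasDerivAt.fun_sum
        intro j _
        have h0T : |(0:ℝ)| ≤ T := by simpa using le_of_lt hT
        exact ((((hderiv2 _ (hentT 0 h0T i j)).comp 0 (hlin 0 i j)).mul_const
          (u i * u j)).const_mul (x i * x j))
      convert H using 1
      rw [hC_def]
      refine Finset.sum_congr rfl fun i _ => Finset.sum_congr rfl fun j _ => ?_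
      rw [zero_mul, add_zero]
      ring
    have hφeq : ∀ t : ℝ, φ t = x ⬝ᵥ ((M t).map f *ᵥ x) := by
      intro t
      rw [hφ_def]
      simp only [Matrix.mulVec, dotProduct, Matrix.map_apply, Finset.mul_sum]
      refine Finset.sum_congr rfl fun i _ => Finset.sum_congr rfl fun j _ => ?_
      rw [hMentry]
      ring
    -- convexity of φ
    have Hconv : ∀ s t : ℝ, s ∈ Set.Icc (-T) T → t ∈ Set.Icc (-T) T → s ≤ t →
        ∀ a b : ℝ, 0 ≤ a → 0 ≤ b → a + b = 1 → φ (a * s + b * t) ≤ a * φ s + b * φ t := by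
      intro s t hs ht hst a b ha hb hab
      have hsT : |s| ≤ T := abs_le.mpr ⟨hs.1, hs.2⟩
      have htT : |t| ≤ T := abs_le.mpr ⟨ht.1, ht.2⟩
      have hsub : M t - M s = (t - s) • V := by
        ext i j
        simp only [Matrix.sub_apply, hMentry, Matrix.smul_apply, hV_def, Matrix.of_apply,
          smul_eq_mul]
        ring
      have hres := hconv (M t) (M s) (hMent t htT) (hMent s hsT) (hrank t) (hrank s)
        (hpsd s hsT) (hsub ▸ hVpsd (t - s) (by linarith)) b hb (by linarith)
      have hmix : b • M t + (1 - b) • M s = M (a * s + b * t) := by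
        ext i j
        simp only [Matrix.add_apply, Matrix.smul_apply, hMentry, smul_eq_mul]
        have ha' : a = 1 - b := by linarith
        rw [ha']
        ring
      have h1b : (1:ℝ) - b = a := by linarith
      have := hres.dotProduct_mulVec_nonneg x
      rw [star_trivial, hmix] at this
      rw [Matrix.sub_mulVec, Matrix.add_mulVec, Matrix.smul_mulVec,
        Matrix.smul_mulVec, dotProduct_sub, dotProduct_add, dotProduct_smul,
        dotProduct_smul, smul_eq_mul, smul_eq_mul, h1b] at this
      rw [hφeq s, hφeq t, hφeq (a * s + b * t)]
      linarith
    have hconvφ : ConvexOn ℝ (Set.Icc (-T) T) φ := by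
      refine ⟨convex_Icc _ _, ?_⟩
      intro s hs t ht a b ha hb hab
      simp only [smul_eq_mul]
      rcases le_total s t with hst | hst
      · exact Hconv s t hs ht hst a b ha hb hab
      · have := Hconv t s ht hs hst b a hb ha (by linarith)
        calc φ (a * s + b * t) = φ (b * t + a * s) := by ring_nf
          _ ≤ b * φ t + a * φ s := this
          _ = a * φ s + b * φ t := by ring
    have hmono : MonotoneOn (deriv φ) (Set.Icc (-T) T) :=
      hconvφ.monotoneOn_deriv
        (fun t ht => (hφd t (abs_le.mpr ⟨ht.1, ht.2⟩)).differentiableAt)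
    have h0T : |(0:ℝ)| ≤ T := by simpa using le_of_lt hT
    have hψmono : ∀ t, t ∈ Set.Ioo (0:ℝ) T → ψ 0 ≤ ψ t := by
      intro t ht
      have h0 : (0:ℝ) ∈ Set.Icc (-T) T := ⟨by linarith, le_of_lt hT⟩
      have h1 : t ∈ Set.Icc (-T) T := ⟨by linarith [ht.1], le_of_lt ht.2⟩
      have h2 := hmono h0 h1 (le_of_lt ht.1)
      rwa [(hφd 0 h0T).deriv, (hφd t (abs_le.mpr ⟨h1.1, h1.2⟩)).deriv] at h2
    -- conclude 0 ≤ C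
    have htend : Filter.Tendsto (slope ψ 0) (nhdsWithin 0 (Set.Ioi 0)) (nhds C) := by
      have := hasDerivAt_iff_tendsto_slope.mp hψd
      exact this.mono_left (nhdsWithin_mono 0 (fun y hy => ne_of_gt hy))
    refine ge_of_tendsto htend ?_
    filter_upwards [Ioo_mem_nhdsGT_of_mem (Set.mem_Ico.mpr ⟨le_refl 0, hT⟩)] with t ht
    rw [slope_def_field]
    have := hψmono t ht
    have htpos : 0 < t := ht.1
    rw [div_nonneg_iff]
    left
    constructor
    · linarith
    · linarith
  -- final assembly
  apply Matrix.PosSemidef.of_dotProduct_mulVec_nonneg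
  · show (A.map f'')ᴴ = A.map f''
    ext i j
    simp only [Matrix.conjTranspose_apply, star_trivial, Matrix.map_apply]
    rw [hAsym j i]
  · intro y
    rw [star_trivial]
    have h := key (fun i => y i / (u i * u i))
    have heq : ∑ i, ∑ j, (fun i => y i / (u i * u i)) i * (fun i => y i / (u i * u i)) j *
        (f'' (A i j) * ((u i * u j) * (u i * u j)))
        = y ⬝ᵥ (A.map f'' *ᵥ y) := by
      simp only [Matrix.mulVec, dotProduct, Matrix.map_apply, Finset.mul_sum]
      refine Finset.sum_congr rfl fun i _ => Finset.sum_congr rfl fun j _ => ?_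
      field_simp [hu i, hu j]
    rw [heq] at h
    exact h
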